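/- Let ρ : ℕ → ℝ satisfy ρ(n) ≥ 0 for all n and ρ(n) ≤ C·log n for all n ≥ 2, for some constant C. Define y : ℕ → ℝ by y(0) = y(1) = 0 and, for n ≥ 2, y(n) = ρ(n) + (2/(n−1))·∑_{k=0}^{n−1} y(k). Then the sequence y(n)/n converges to a finite limit as n → ∞. -/

import Mathlib

open Filter

/-- If 0 ≤ ρ(n) ≤ C log n and y(0) = y(1) = 0 with
y(n) = ρ(n) + (2/(n-1))·∑_{k<n} y(k) for n ≥ 2, then y(n)/n converges. -/
theorem selfAveraging_d2_div_converges
    (ρ : ℕ → ℝ) (C : ℝ) (hρ0 : ∀ n, 0 ≤ ρ n) (hρC : ∀ n ≥ 2, ρ n ≤ C * Real.log n)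
    (y : ℕ → ℝ) (hy0 : y 0 = 0) (hy1 : y 1 = 0)
    (hrec : ∀ n ≥ 2, y n = ρ n + (2 / ((n : ℝ) - 1)) * ∑ k ∈ Finset.range n, y k) :
    ∃ c : ℝ, Tendsto (fun n : ℕ => y n / n) atTop (nhds c) := by
  set S : ℕ → ℝ := fun n => ∑ k ∈ Finset.range n, y k with hS
  set f : ℕ → ℝ := fun k => if 2 ≤ k then ρ k / (k * (k + 1)) else 0 with hf
  -- C ≥ 0
  have hC : 0 ≤ C := by
    have h1 := hρ0 2
    have h2 := hρC 2 le_rfl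
    have hl : 0 < Real.log 2 := Real.log_pos (by norm_num)
    push_cast at h2
    nlinarith
  -- key identity: a n = partial sums of f, where a n = S n / ((n-1)*n)
  have key : ∀ n, 2 ≤ n → S n / (((n : ℝ) - 1) * n) = ∑ k ∈ Finset.range n, f k := by
    intro n hn
    induction n with
    | zero => omega
    | succ m ih =>
      rcases Nat.lt_or_ge m 2 with hm | hm
      · interval_cases m
        · omega
        · simp [hS, hf, Finset.sum_range_succ, hy0, hy1]
      · have hm1 : (1 : ℝ) ≤ (m : ℝ) := by exact_mod_cast Nat.one_le_of_lt hm
        have hm0 : (0 : ℝ) < (m : ℝ) := by positivity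
        have hmne : (m : ℝ) - 1 ≠ 0 := by
          have : (2 : ℝ) ≤ (m : ℝ) := by exact_mod_cast hm
          linarith
        have hrecm := hrec m hm
        have hSsucc : S (m + 1) = S m + y m := by
          simp [hS, Finset.sum_range_succ]
        have ihm := ih hm
        rw [Finset.sum_range_succ, ← ihm]
        have hfm : f m = ρ m / (m * (m + 1)) := by simp [hf, hm]
        rw [hfm, hSsucc, hrecm]
        push_cast
        have hmp1 : (m : ℝ) + 1 ≠ 0 := by positivity
        have hm0' : (m : ℝ) ≠ 0 := hm0.ne'
        rw [show (∑ k ∈ Finset.range m, y k) = S m from rfl]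
        field_simp
        have hinv : (m : ℝ) * (m : ℝ)⁻¹ = 1 := mul_inv_cancel₀ hm0'
        linear_combination (S m - ρ m + (m : ℝ) * (S m + ρ m)) * hinv
  -- summability of f
  have hfnn : ∀ k, 0 ≤ f k := by
    intro k
    simp only [hf]
    split
    · exact div_nonneg (hρ0 k) (by positivity)
    · exact le_rfl
  have hsum : Summable f := by
    have hbound : ∀ k : ℕ, f k ≤ 2 * C * (1 / (k : ℝ) ^ (3/2 : ℝ)) := by
      intro k
      by_cases hk : 2 ≤ k
      · have hk1 : (1 : ℝ) ≤ (k : ℝ) := by exact_mod_cast Nat.one_le_of_lt hk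
        have hk0 : (0 : ℝ) < (k : ℝ) := by linarith
        have hlog : Real.log k ≤ 2 * Real.sqrt k := by
          have h1 : Real.log (Real.sqrt k) ≤ Real.sqrt k - 1 :=
            Real.log_le_sub_one_of_pos (Real.sqrt_pos.mpr hk0)
          have h2 : Real.log (Real.sqrt k) = Real.log k / 2 :=
            Real.log_sqrt hk0.le
          nlinarith [Real.sqrt_nonneg (k : ℝ)]
        have hρk : ρ k ≤ C * (2 * Real.sqrt k) := by
          calc ρ k ≤ C * Real.log k := hρC k hk
            _ ≤ C * (2 * Real.sqrt k) := by
                apply mul_le_mul_of_nonneg_left hlog hC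
        have hfk : f k = ρ k / (k * (k + 1)) := by simp [hf, hk]
        rw [hfk]
        have hden : (0 : ℝ) < (k : ℝ) * (k + 1) := by positivity
        rw [div_le_iff₀ hden]
        have hkk : (k : ℝ) ^ (3/2 : ℝ) * Real.sqrt k = (k:ℝ)^2 := by
          rw [Real.sqrt_eq_rpow, ← Real.rpow_add hk0,
            show (3/2 : ℝ) + 1/2 = ((2:ℕ):ℝ) by norm_num, Real.rpow_natCast]
        have hk32 : (0:ℝ) < (k:ℝ) ^ (3/2 : ℝ) := Real.rpow_pos_of_pos hk0 _
        have e : 2 * C * (1 / (k:ℝ) ^ (3/2 : ℝ)) * ((k:ℝ)^2) = 2 * C * Real.sqrt k := by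
          rw [← hkk]
          field_simp
        have hmono : 2 * C * (1 / (k:ℝ) ^ (3/2 : ℝ)) * ((k:ℝ)^2)
            ≤ 2 * C * (1 / (k:ℝ) ^ (3/2 : ℝ)) * ((k:ℝ) * ((k:ℝ)+1)) := by
          apply mul_le_mul_of_nonneg_left (by nlinarith) (by positivity)
        linarith
      · have hknn : (0:ℝ) ≤ (k:ℝ) ^ (3/2 : ℝ) := Real.rpow_nonneg (Nat.cast_nonneg k) _
        simp only [hf, hk, if_false]
        positivity
    apply Summable.of_nonneg_of_le hfnn hbound
    exact ((Real.summable_one_div_nat_rpow.mpr (by norm_num)).mul_left _)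
  -- limit
  obtain ⟨L, hL⟩ := hsum
  have hpartial : Tendsto (fun n => ∑ k ∈ Finset.range n, f k) atTop (nhds L) :=
    hL.tendsto_sum_nat
  have haL : Tendsto (fun n : ℕ => S n / (((n : ℝ) - 1) * n)) atTop (nhds L) := by
    apply hpartial.congr'
    filter_upwards [eventually_ge_atTop 2] with n hn
    exact (key n hn).symm
  -- ρ n / n → 0
  have hρ0' : Tendsto (fun n : ℕ => ρ n / n) atTop (nhds 0) := by
    have hupper : Tendsto (fun n : ℕ => C * (Real.log n / n)) atTop (nhds 0) := by
      have := (Real.tendsto_pow_log_div_mul_add_atTop 1 0 1 one_ne_zero).comp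
        tendsto_natCast_atTop_atTop (α := ℕ)
      simpa using this.const_mul C
    apply squeeze_zero' (g := fun n : ℕ => C * (Real.log n / n)) ?_ ?_ hupper
    · filter_upwards with n using div_nonneg (hρ0 n) (Nat.cast_nonneg n)
    · filter_upwards [eventually_ge_atTop 2] with n hn
      have hn0 : (0:ℝ) < (n:ℝ) := by
        have : 0 < n := by omega
        exact_mod_cast this
      rw [mul_div_assoc']
      exact div_le_div_of_nonneg_right (hρC n hn) hn0.le
  refine ⟨0 + 2 * L, ?_⟩
  have : Tendsto (fun n : ℕ => ρ n / n + 2 * (S n / (((n : ℝ) - 1) * n))) atTop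
      (nhds (0 + 2 * L)) := hρ0'.add (haL.const_mul 2)
  apply this.congr'
  filter_upwards [eventually_ge_atTop 2] with n hn
  have hn1 : (1:ℝ) < (n:ℝ) := by exact_mod_cast Nat.lt_of_lt_of_le one_lt_two hn
  have hne : (n:ℝ) - 1 ≠ 0 := by linarith
  have hne2 : (n:ℝ) ≠ 0 := by linarith
  rw [hrec n hn]
  field_simp
  ring
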